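/- Let m > 0 and let (F_N)_{N≥1} be complex numbers with |F_N| ≤ m^N for every N ≥ 1. Then the series A(γ) = Σ_{N≥1} F_N γ^N converges for |γ| < 1/m and defines a holomorphic function there, the composition γ ↦ exp(A(γ)) is holomorphic on the disc |γ| < 1/m, and for every integer n ≥ 0 its n-th derivative at γ = 0 satisfies the bound |(d^n/dγ^n) exp(A(γ)) |_{γ=0}| ≤ (4m)^n · (d^n/dt^n) exp(1/(2−t)) |_{t=0}, where the right-hand side is the n-th derivative at 0 of the real-analytic function t ↦ exp(1/(2−t)) (a nonnegative real number). -/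

import Mathlib

open FormalMultilinearSeries

section Helpers

set_option linter.unusedSectionVars false

variable {𝕜 : Type*} [NontriviallyNormedField 𝕜] [CompleteSpace 𝕜]

lemma myOfScalars_coeff (c : ℕ → 𝕜) (n : ℕ) :
    (FormalMultilinearSeries.ofScalars 𝕜 c).coeff n = c n := by
  simp [FormalMultilinearSeries.coeff, FormalMultilinearSeries.ofScalars, List.prod_ofFn]

lemma myIteratedDeriv_eq {f : 𝕜 → 𝕜} {p : FormalMultilinearSeries 𝕜 𝕜 𝕜}
    {x : 𝕜} (h : HasFPowerSeriesAt f p x) (n : ℕ) :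
    iteratedDeriv n f x = n.factorial • p.coeff n := by
  obtain ⟨r, hr⟩ := h
  have h1 := hr.factorial_smul (1 : 𝕜) n
  rw [iteratedFDeriv_apply_eq_iteratedDeriv_mul_prod] at h1
  simp only [Finset.prod_const_one, one_smul] at h1
  rw [← h1, FormalMultilinearSeries.coeff]
  rfl

lemma myOfScalars_comp_coeff (d c : ℕ → 𝕜) (n : ℕ) :
    ((ofScalars 𝕜 d).comp (ofScalars 𝕜 c)).coeff n =
      ∑ co : Composition n, d co.length * ∏ i, c (co.blocksFun i) := by
  rw [FormalMultilinearSeries.coeff, FormalMultilinearSeries.comp,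
    ContinuousMultilinearMap.sum_apply]
  refine Finset.sum_congr rfl fun co _ => ?_
  rw [FormalMultilinearSeries.compAlongComposition_apply]
  have h1 : (ofScalars 𝕜 c).applyComposition co 1 = fun i => c (co.blocksFun i) := by
    funext i
    simp [FormalMultilinearSeries.applyComposition, FormalMultilinearSeries.ofScalars,
      List.prod_ofFn]
  rw [h1]
  simp [FormalMultilinearSeries.ofScalars, List.prod_ofFn]

/-- key elementary inequality: for `1 ≤ b`, `m ^ b ≤ (4*m) ^ b * (1/2) ^ (b+1)`. -/
lemma myPow_ineq (m : ℝ) (hm : 0 ≤ m) (b : ℕ) (hb : 1 ≤ b) :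
    m ^ b ≤ (4 * m) ^ b * ((1:ℝ)/2) ^ (b + 1) := by
  obtain ⟨k, rfl⟩ := Nat.exists_eq_add_of_le hb
  have h1 : (1:ℝ) ≤ (4:ℝ) ^ (1 + k) * ((1:ℝ)/2) ^ (1 + k + 1) := by
    induction k with
    | zero => norm_num
    | succ k ih =>
      have : (4:ℝ) ^ (1 + (k+1)) * ((1:ℝ)/2) ^ (1 + (k+1) + 1)
          = ((4:ℝ) ^ (1 + k) * ((1:ℝ)/2) ^ (1 + k + 1)) * 2 := by
        ring
      rw [this]
      have ih' := ih (by omega)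
      nlinarith
  calc m ^ (1+k) = 1 * m ^ (1+k) := by ring
    _ ≤ ((4:ℝ) ^ (1 + k) * ((1:ℝ)/2) ^ (1 + k + 1)) * m ^ (1+k) := by
        apply mul_le_mul_of_nonneg_right h1 (by positivity)
    _ = (4 * m) ^ (1+k) * ((1:ℝ)/2) ^ (1 + k + 1) := by
        rw [mul_pow]; ring

end Helpers

theorem statement10 (m : ℝ) (hm : 0 < m) (F : ℕ → ℂ)
    (hF : ∀ N : ℕ, 1 ≤ N → ‖F N‖ ≤ m ^ N) :
    (∀ γ : ℂ, ‖γ‖ < 1 / m →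
      Summable (fun N : ℕ => F (N + 1) * γ ^ (N + 1))) ∧
    DifferentiableOn ℂ (fun γ : ℂ => ∑' N : ℕ, F (N + 1) * γ ^ (N + 1))
      (Metric.ball 0 (1 / m)) ∧
    DifferentiableOn ℂ
      (fun γ : ℂ => Complex.exp (∑' N : ℕ, F (N + 1) * γ ^ (N + 1)))
      (Metric.ball 0 (1 / m)) ∧
    ∀ n : ℕ,
      ‖iteratedDeriv n
          (fun γ : ℂ => Complex.exp (∑' N : ℕ, F (N + 1) * γ ^ (N + 1))) 0‖
        ≤ (4 * m) ^ n * iteratedDeriv n (fun t : ℝ => Real.exp (1 / (2 - t))) 0 := by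
  classical
  set a : ℕ → ℂ := fun n => if n = 0 then 0 else F n with ha
  set Af : ℂ → ℂ := fun γ => ∑' N : ℕ, F (N + 1) * γ ^ (N + 1) with hAf
  have hab : ∀ n : ℕ, ‖a n‖ ≤ m ^ n := by
    intro n
    rcases n with _ | k
    · simp [ha]
    · simpa [ha] using hF (k+1) (by omega)
  -- summability
  have hsum : ∀ γ : ℂ, ‖γ‖ < 1 / m → Summable (fun n : ℕ => a n * γ ^ n) := by
    intro γ hγ
    have hq0 : 0 ≤ m * ‖γ‖ := by positivity
    have hq : m * ‖γ‖ < 1 := by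
      rw [lt_div_iff₀ hm] at hγ; linarith
    refine Summable.of_norm_bounded (g := fun n => (m * ‖γ‖) ^ n)
      (summable_geometric_of_lt_one hq0 hq) ?_
    intro n
    rcases n with _ | k
    · simp [ha]
    · calc ‖a (k+1) * γ ^ (k+1)‖ = ‖a (k+1)‖ * ‖γ‖ ^ (k+1) := by
            rw [norm_mul, norm_pow]
        _ ≤ m ^ (k+1) * ‖γ‖ ^ (k+1) := by
            apply mul_le_mul_of_nonneg_right (hab _) (by positivity)
        _ = (m * ‖γ‖) ^ (k+1) := by rw [mul_pow]
  have hsum' : ∀ γ : ℂ, ‖γ‖ < 1 / m →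
      Summable (fun N : ℕ => F (N + 1) * γ ^ (N + 1)) := by
    intro γ hγ
    have h1 := (summable_nat_add_iff 1).2 (hsum γ hγ)
    refine h1.congr fun n => ?_
    simp [ha]
  have htsum : ∀ γ : ℂ, ‖γ‖ < 1 / m →
      HasSum (fun n : ℕ => a n * γ ^ n) (Af γ) := by
    intro γ hγ
    have hs := hsum γ hγ
    have h2 : Af γ = ∑' n : ℕ, a n * γ ^ n := by
      rw [Summable.tsum_eq_zero_add hs]
      simp [ha, hAf]
    rw [h2]
    exact hs.hasSum
  have hmem : ∀ γ : ℂ, γ ∈ Metric.ball (0:ℂ) (1/m) → ‖γ‖ < 1 / m := by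
    intro γ hγ
    simpa [Complex.dist_eq] using Metric.mem_ball.1 hγ
  have hApos : (0:ℝ) < 1 / m := by positivity
  -- power series for Af at 0
  have hA : HasFPowerSeriesAt Af (ofScalars ℂ a) 0 := by
    rw [hasFPowerSeriesAt_iff]
    filter_upwards [Metric.ball_mem_nhds (0:ℂ) hApos] with z hz
    rw [zero_add]
    have h3 := htsum z (hmem z hz)
    refine h3.congr_fun fun n => ?_
    rw [myOfScalars_coeff, smul_eq_mul, mul_comm]
  -- radius bound
  have hrad : ENNReal.ofReal (1/m) ≤ (ofScalars ℂ a).radius := by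
    refine ENNReal.le_of_forall_nnreal_lt fun r hr => ?_
    have hrm : m * (r : ℝ) ≤ 1 := by
      have h1 : (r : ℝ) < 1 / m := by
        rw [← ENNReal.ofReal_coe_nnreal] at hr
        exact (ENNReal.ofReal_lt_ofReal_iff hApos).1 hr
      have h2 : (r:ℝ) * m < 1 := (lt_div_iff₀ hm).1 h1
      nlinarith [r.coe_nonneg]
    refine FormalMultilinearSeries.le_radius_of_bound _ 1 fun n => ?_
    have h2 : ‖ofScalars ℂ a n‖ ≤ ‖a n‖ := by
      rw [FormalMultilinearSeries.ofScalars]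
      refine (norm_smul_le (a n) (ContinuousMultilinearMap.mkPiAlgebraFin ℂ n ℂ)).trans ?_
      rw [ContinuousMultilinearMap.norm_mkPiAlgebraFin]
      simp
    calc ‖ofScalars ℂ a n‖ * (r:ℝ) ^ n ≤ m ^ n * (r:ℝ) ^ n := by
          apply mul_le_mul_of_nonneg_right ((h2.trans (hab n))) (by positivity)
      _ = (m * (r:ℝ)) ^ n := by rw [mul_pow]
      _ ≤ 1 ^ n := pow_le_pow_left₀ (by positivity) hrm n
      _ = 1 := one_pow n
  -- Af agrees with the series sum on the ball
  have hAeq : ∀ γ ∈ Metric.ball (0:ℂ) (1/m), Af γ = (ofScalars ℂ a).sum γ := by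
    intro γ hγ
    have h3 := htsum γ (hmem γ hγ)
    rw [FormalMultilinearSeries.sum]
    rw [← h3.tsum_eq]
    refine tsum_congr fun n => ?_
    rw [FormalMultilinearSeries.ofScalars_apply_eq, smul_eq_mul]
  have hballpos : (0:ENNReal) < ENNReal.ofReal (1/m) := by
    exact ENNReal.ofReal_pos.2 hApos
  have hOnBall : HasFPowerSeriesOnBall (ofScalars ℂ a).sum (ofScalars ℂ a) 0
      (ENNReal.ofReal (1/m)) :=
    ((ofScalars ℂ a).hasFPowerSeriesOnBall (lt_of_lt_of_le hballpos hrad)).mono hballpos hrad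
  have hdiffsum : DifferentiableOn ℂ (ofScalars ℂ a).sum (Metric.ball (0:ℂ) (1/m)) := by
    have := hOnBall.analyticOnNhd.differentiableOn
    rwa [Metric.emetric_ball] at this
  have hdiffA : DifferentiableOn ℂ Af (Metric.ball (0:ℂ) (1/m)) :=
    hdiffsum.congr hAeq
  have hdiffexp : DifferentiableOn ℂ (fun γ : ℂ => Complex.exp (Af γ))
      (Metric.ball (0:ℂ) (1/m)) := hdiffA.cexp
  refine ⟨hsum', hdiffA, hdiffexp, ?_⟩
  -- derivative bound
  intro n
  have hA0 : Af 0 = 0 := by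
    rw [hAf]
    simp
  have hexpS : HasFPowerSeriesAt Complex.exp
      (ofScalars ℂ (fun k => ((k.factorial : ℂ))⁻¹)) (Af 0) := by
    rw [hA0, hasFPowerSeriesAt_iff]
    filter_upwards with z
    have h := NormedSpace.expSeries_div_hasSum_exp z
    rw [← Complex.exp_eq_exp_ℂ] at h
    rw [zero_add]
    refine h.congr_fun fun k => ?_
    simp [myOfScalars_coeff, smul_eq_mul, div_eq_mul_inv]
  have hGseries : HasFPowerSeriesAt (fun γ => Complex.exp (Af γ))
      ((ofScalars ℂ (fun k => ((k.factorial : ℂ))⁻¹)).comp (ofScalars ℂ a)) 0 :=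
    hexpS.comp hA
  -- real side
  set u : ℕ → ℝ := fun k => if k = 0 then 0 else ((1:ℝ)/2) ^ (k+1) with hu
  set go : ℝ → ℝ := fun t => 1/(2 - t) - 1/2 with hgo
  set oo : ℝ → ℝ := fun y => Real.exp (1/2 + y) with hoo
  have hHeq : (fun t : ℝ => Real.exp (1 / (2 - t))) = oo ∘ go := by
    funext t
    simp only [hoo, hgo, Function.comp_apply]
    congr 1
    ring
  have hgS : HasFPowerSeriesAt go (ofScalars ℝ u) 0 := by
    rw [hasFPowerSeriesAt_iff]
    filter_upwards [Metric.ball_mem_nhds (0:ℝ) one_pos] with z hz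
    have hz1 : |z| < 1 := by simpa [Real.dist_eq] using hz
    have hz2 : ‖z/2‖ < 1 := by
      rw [Real.norm_eq_abs, abs_div]
      rw [abs_of_pos (by norm_num : (0:ℝ) < 2)]
      linarith
    have h0 := hasSum_geometric_of_norm_lt_one hz2
    have h1 := h0.mul_left ((1:ℝ)/2)
    have h2 : HasSum (fun k : ℕ => if k = 0 then (1:ℝ)/2 else 0) (1/2) :=
      hasSum_ite_eq 0 _
    have h3 := h1.sub h2
    have h2z : (2:ℝ) - z ≠ 0 := by
      intro h
      rw [sub_eq_zero] at h
      rw [← h] at hz1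
      norm_num at hz1
    have hfun : (fun k : ℕ => z ^ k • (ofScalars ℝ u).coeff k)
        = fun k => (1:ℝ)/2 * (z/2) ^ k - (if k = 0 then (1:ℝ)/2 else 0) := by
      funext k
      rw [myOfScalars_coeff]
      rcases k with _ | j
      · simp [hu]
      · simp only [hu, if_neg (Nat.succ_ne_zero j)]
        rw [smul_eq_mul, div_pow]
        ring_nf
        norm_num
    have hval : go (0 + z) = (1:ℝ)/2 * (1 - z/2)⁻¹ - 1/2 := by
      rw [zero_add, hgo]
      have h4 : (1:ℝ) - z/2 = (2 - z)/2 := by ring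
      rw [h4]
      field_simp
    rw [hfun, hval]
    exact h3
  have hg0 : go 0 = 0 := by
    rw [hgo]
    norm_num
  have hoS : HasFPowerSeriesAt oo
      (ofScalars ℝ (fun k => Real.exp (1/2) * ((k.factorial : ℝ))⁻¹)) (go 0) := by
    rw [hg0, hasFPowerSeriesAt_iff]
    filter_upwards with z
    have h := (NormedSpace.expSeries_div_hasSum_exp z).mul_left (Real.exp (1/2))
    rw [← Real.exp_eq_exp_ℝ] at h
    rw [zero_add]
    have hval : oo z = Real.exp (1/2) * Real.exp z := by
      rw [hoo]
      exact Real.exp_add _ _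
    rw [hval]
    refine h.congr_fun fun k => ?_
    rw [myOfScalars_coeff, smul_eq_mul, div_eq_mul_inv]
    ring
  have hHS : HasFPowerSeriesAt (fun t : ℝ => Real.exp (1 / (2 - t)))
      ((ofScalars ℝ (fun k => Real.exp (1/2) * ((k.factorial : ℝ))⁻¹)).comp
        (ofScalars ℝ u)) 0 := by
    rw [hHeq]
    exact hoS.comp hgS
  -- compute both iterated derivatives
  have hLHS := myIteratedDeriv_eq hGseries n
  have hRHS := myIteratedDeriv_eq hHS n
  rw [myOfScalars_comp_coeff] at hLHS
  rw [myOfScalars_comp_coeff] at hRHS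
  -- nonnegativity of u
  have hu0 : ∀ k, 0 ≤ u k := by
    intro k
    simp only [hu]
    rcases k with _ | j
    · simp
    · simp only [if_neg (Nat.succ_ne_zero j)]
      positivity
  have key : ‖∑ co : Composition n,
        ((co.length.factorial : ℂ))⁻¹ * ∏ i, a (co.blocksFun i)‖
      ≤ (4*m)^n * ∑ co : Composition n,
        Real.exp (1/2) * ((co.length.factorial : ℝ))⁻¹ * ∏ i, u (co.blocksFun i) := by
    rw [Finset.mul_sum]
    refine (norm_sum_le _ _).trans (Finset.sum_le_sum fun co _ => ?_)
    have habs : ‖((co.length.factorial : ℂ))⁻¹ * ∏ i, a (co.blocksFun i)‖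
        = ((co.length.factorial : ℝ))⁻¹ * ∏ i, ‖a (co.blocksFun i)‖ := by
      rw [norm_mul, norm_inv, Complex.norm_natCast, norm_prod]
    rw [habs]
    have hprod1 : ∏ i, ‖a (co.blocksFun i)‖ ≤ ∏ i, m ^ (co.blocksFun i) :=
      Finset.prod_le_prod (fun i _ => norm_nonneg _) (fun i _ => hab _)
    have hprod2 : ∏ i, (m:ℝ) ^ (co.blocksFun i)
        ≤ ∏ i, ((4*m) ^ (co.blocksFun i) * u (co.blocksFun i)) := by
      refine Finset.prod_le_prod (fun i _ => by positivity) (fun i _ => ?_)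
      have hb := co.one_le_blocksFun i
      have h5 := myPow_ineq m hm.le (co.blocksFun i) hb
      have h6 : u (co.blocksFun i) = ((1:ℝ)/2) ^ (co.blocksFun i + 1) := by
        simp only [hu]
        rw [if_neg (by omega)]
      rw [h6]
      exact h5
    have hprod3 : ∏ i, ((4*m) ^ (co.blocksFun i) * u (co.blocksFun i))
        = (4*m)^n * ∏ i, u (co.blocksFun i) := by
      rw [Finset.prod_mul_distrib, Finset.prod_pow_eq_pow_sum, co.sum_blocksFun]
    have hfac : (0:ℝ) ≤ ((co.length.factorial : ℝ))⁻¹ := by positivity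
    have hexp1 : (1:ℝ) ≤ Real.exp (1/2) := Real.one_le_exp (by norm_num)
    have hup : (0:ℝ) ≤ ∏ i, u (co.blocksFun i) :=
      Finset.prod_nonneg fun i _ => hu0 _
    calc ((co.length.factorial : ℝ))⁻¹ * ∏ i, ‖a (co.blocksFun i)‖
        ≤ ((co.length.factorial : ℝ))⁻¹ * ((4*m)^n * ∏ i, u (co.blocksFun i)) := by
          rw [← hprod3]
          exact mul_le_mul_of_nonneg_left (hprod1.trans hprod2) hfac
      _ ≤ Real.exp (1/2) * (((co.length.factorial : ℝ))⁻¹ *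
            ((4*m)^n * ∏ i, u (co.blocksFun i))) := by
          nlinarith [mul_nonneg hfac (mul_nonneg (by positivity : (0:ℝ) ≤ (4*m)^n) hup)]
      _ = (4*m)^n * (Real.exp (1/2) * ((co.length.factorial : ℝ))⁻¹ *
            ∏ i, u (co.blocksFun i)) := by ring
  have final : ‖iteratedDeriv n (fun γ : ℂ => Complex.exp (Af γ)) 0‖
      ≤ (4 * m) ^ n * iteratedDeriv n (fun t : ℝ => Real.exp (1 / (2 - t))) 0 := by
    rw [hLHS, hRHS, nsmul_eq_mul, nsmul_eq_mul, norm_mul, Complex.norm_natCast]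
    calc (n.factorial : ℝ) * ‖∑ co : Composition n,
          ((co.length.factorial : ℂ))⁻¹ * ∏ i, a (co.blocksFun i)‖
        ≤ (n.factorial : ℝ) * ((4*m)^n * ∑ co : Composition n,
            Real.exp (1/2) * ((co.length.factorial : ℝ))⁻¹ * ∏ i, u (co.blocksFun i)) := by
          exact mul_le_mul_of_nonneg_left key (by positivity)
      _ = (4 * m) ^ n * ((n.factorial : ℝ) * ∑ co : Composition n,
            Real.exp (1/2) * ((co.length.factorial : ℝ))⁻¹ * ∏ i, u (co.blocksFun i)) := by
          ring
  exact final
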